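/- There is a bijection between the set of ideals B on {0,...,n} containing the identity ideal, and the set of relations on {0,...,n} that are reflexive, symmetric, and have the interpolation property. -/
import Mathlib


/-- bijection between ideals containing the identity ideal on [n]
and reflexive symmetric interpolating relations on [n]. -/
theorem stmt2 (n : ℕ) :
    Nonempty
      ({B : Fin (n+1) → Fin (n+1) → Prop //
          (∀ q j i p : Fin (n+1), q ≤ j → B j i → i ≤ p → B q p) ∧
          (∀ j i : Fin (n+1), j ≤ i → B j i)} ≃
       {R : Fin (n+1) → Fin (n+1) → Prop //
          (∀ i, R i i) ∧ (∀ i j, R i j → R j i) ∧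
          (∀ i j k, i ≤ j → j ≤ k → R i k → R i j ∧ R j k)}) := by
  constructor
  refine
    { toFun := fun ⟨B, hcl, hid⟩ =>
        ⟨fun i j => B (max i j) (min i j), ?_, ?_, ?_⟩
      invFun := fun ⟨R, hrefl, hsymm, hint⟩ =>
        ⟨fun j i => j ≤ i ∨ R i j, ?_, fun j i h => Or.inl h⟩
      left_inv := ?_
      right_inv := ?_ }
  · intro i; simpa using hid i i le_rfl
  · intro i j h; simpa [max_comm, min_comm] using h
  · intro i j k hij hjk h
    rw [max_eq_right (hij.trans hjk), min_eq_left (hij.trans hjk)] at h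
    constructor
    · show B (max i j) (min i j)
      rw [max_eq_right hij, min_eq_left hij]
      exact hcl j k i i hjk h le_rfl
    · show B (max j k) (min j k)
      rw [max_eq_right hjk, min_eq_left hjk]
      exact hcl k k i j le_rfl h hij
  · -- closure for invFun
    intro q j i p hqj hB hip
    rcases hB with hji | hR
    · exact Or.inl (hqj.trans (hji.trans hip))
    · by_cases hqp : q ≤ p
      · exact Or.inl hqp
      · push_neg at hqp
        right
        rcases le_total i j with hijle | hjile
        · have h1 : i ≤ q := hip.trans hqp.le
          have h2 := (hint i q j h1 hqj hR).1
          exact (hint i p q hip hqp.le h2).2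
        · exact absurd ((hqj.trans hjile).trans hip) (not_le.mpr hqp)
  · rintro ⟨B, hcl, hid⟩
    apply Subtype.ext
    funext j i
    apply propext
    constructor
    · rintro (h | h)
      · exact hid j i h
      · exact hcl j (max i j) (min i j) i (le_max_right i j) h (min_le_left i j)
    · intro h
      rcases le_total j i with hji | hij
      · exact Or.inl hji
      · right
        show B (max i j) (min i j)
        rw [max_eq_right hij, min_eq_left hij]
        exact h
  · rintro ⟨R, hrefl, hsymm, hint⟩
    apply Subtype.ext
    funext i j
    apply propext
    constructor
    · rintro (h | h)
      · have hij : i = j := le_antisymm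
          ((le_max_left i j).trans (h.trans (min_le_right i j)))
          ((le_max_right i j).trans (h.trans (min_le_left i j)))
        subst hij; exact hrefl i
      · rcases le_total i j with hle | hle
        · rwa [max_eq_right hle, min_eq_left hle] at h
        · rw [max_eq_left hle, min_eq_right hle] at h
          exact hsymm j i h
    · intro h
      right
      rcases le_total i j with hle | hle
      · rwa [max_eq_right hle, min_eq_left hle]
      · rw [max_eq_left hle, min_eq_right hle]
        exact hsymm i j h
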